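/- Let β ∈ (0,1) and for z ∈ (0,1) let β^{i(z)} denote the largest power β^i (i a nonnegative integer) that is strictly less than z. Fix k ≥ 1 and a finite set S of n ≥ k+1 distinct values in (0,1), and for x ∈ (0,1) \ S let T(x) = β^{i(m(x))} where m(x) is the (k+1)-st smallest element of S ∪ {x}. Then T satisfies 1-Goodness with threshold F = β^{i(a)}, where a is the k-th smallest element of S. -/

import Mathlib

lemma getElem_mono_of_sorted_lt {l : List ℝ} (hl : l.Pairwise (· < ·)) {i j : ℕ}
    (hij : i ≤ j) (hj : j < l.length) :
    l[i]'(lt_of_le_of_lt hij hj) ≤ l[j] := by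
  rcases eq_or_lt_of_le hij with rfl | h
  · exact le_refl _
  · exact (List.pairwise_iff_getElem.mp hl _ _ _ hj h).le

lemma countP_lt_getElem {l : List ℝ} (hl : l.Pairwise (· < ·)) {i : ℕ} (hi : i < l.length) :
    l.countP (fun y => decide (y < l[i])) = i := by
  have h1 : (l.take i).countP (fun y => decide (y < l[i])) = i := by
    rw [List.countP_eq_length.mpr, List.length_take, min_eq_left hi.le]
    intro a ha
    obtain ⟨j, hj, rfl⟩ := List.mem_iff_getElem.mp ha
    rw [List.getElem_take]
    have hji : j < i := by
      have := hj; rw [List.length_take] at this; omega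
    exact decide_eq_true (List.pairwise_iff_getElem.mp hl _ _ _ hi hji)
  have h2 : (l.drop i).countP (fun y => decide (y < l[i])) = 0 := by
    rw [List.countP_eq_zero]
    intro a ha
    obtain ⟨j, hj, rfl⟩ := List.mem_iff_getElem.mp ha
    rw [List.getElem_drop]
    have hle : l[i] ≤ l[i + j]'(by rw [List.length_drop] at hj; omega) :=
      getElem_mono_of_sorted_lt hl (Nat.le_add_right _ _) (by rw [List.length_drop] at hj; omega)
    simpa using not_lt.mpr hle
  set e := l[i] with he
  conv_lhs => rw [← List.take_append_drop i l]
  rw [List.countP_append, ← he] at *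
  rw [h1, h2]
  omega

lemma getElem_eq_of_countP {l : List ℝ} (hl : l.Pairwise (· < ·)) {e : ℝ} (he : e ∈ l)
    {i : ℕ} (hi : i < l.length)
    (hc : l.countP (fun y => decide (y < e)) = i) : l[i] = e := by
  obtain ⟨j, hj, rfl⟩ := List.mem_iff_getElem.mp he
  rw [countP_lt_getElem hl hj] at hc
  subst hc
  rfl

/-- The Adaptive-Sampling threshold-choosing function satisfies 1-Goodness:
with `β ∈ (0,1)` and `iz z` the least nonnegative integer `i` with `β^i < z`,
the map `x ↦ β ^ iz (m x)` (where `m x` is the `(k+1)`-st smallest element of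
`S ∪ {x}`) is 1-Good with threshold `β ^ iz a`, where `a` is the `k`-th
smallest element of `S`. -/
theorem stmt5 (β : ℝ) (hβ : β ∈ Set.Ioo (0:ℝ) 1)
    (iz : ℝ → ℕ)
    (hiz : ∀ z ∈ Set.Ioo (0:ℝ) 1, β ^ iz z < z ∧ ∀ i : ℕ, β ^ i < z → iz z ≤ i)
    (k : ℕ) (hk : 1 ≤ k) (S : Finset ℝ)
    (hS : ↑S ⊆ Set.Ioo (0:ℝ) 1) (hcard : k + 1 ≤ S.card) :
    ∀ x ∈ Set.Ioo (0:ℝ) 1, x ∉ S →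
      (x < β ^ iz ((S.sort (· ≤ ·)).getD (k - 1) 0) →
        β ^ iz (((insert x S).sort (· ≤ ·)).getD k 0)
          = β ^ iz ((S.sort (· ≤ ·)).getD (k - 1) 0)) ∧
      (β ^ iz ((S.sort (· ≤ ·)).getD (k - 1) 0) ≤ x →
        β ^ iz (((insert x S).sort (· ≤ ·)).getD k 0) ≤ x) := by
  intro x hx hxS
  set L := S.sort (· ≤ ·) with hL
  set L' := (insert x S).sort (· ≤ ·) with hL'
  have hsL : L.Pairwise (· < ·) := S.sortedLT_sort.pairwise
  have hsL' : L'.Pairwise (· < ·) := (insert x S).sortedLT_sort.pairwise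
  have hlenL : L.length = S.card := Finset.length_sort _
  have hlenL' : L'.length = S.card + 1 := by
    rw [hL', Finset.length_sort, Finset.card_insert_of_notMem hxS]
  have hk1 : k - 1 < L.length := by omega
  have hkL' : k < L'.length := by omega
  have hgdL : L.getD (k-1) 0 = L[k-1] := List.getD_eq_getElem _ _ hk1
  have hgdL' : L'.getD k 0 = L'[k] := List.getD_eq_getElem _ _ hkL'
  have haS : L[k-1] ∈ S := by
    rw [← Finset.mem_sort (α := ℝ) (· ≤ ·)]; exact List.getElem_mem _
  have haI : L[k-1] ∈ Set.Ioo (0:ℝ) 1 := hS haS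
  have hxa : x ≠ L[k-1] := fun h => hxS (h ▸ haS)
  have hperm : List.Perm L' (x :: L) := by
    refine (Finset.sort_perm_toList (insert x S) (· ≤ ·)).trans ?_
    exact (Finset.toList_insert hxS).trans (List.Perm.cons x (Finset.sort_perm_toList S (· ≤ ·)).symm)
  -- Case x < a: the (k+1)-st smallest of insert x S equals a
  have hmain : x < L[k-1] → L'[k] = L[k-1] := by
    intro hlt
    apply getElem_eq_of_countP hsL'
      (by rw [hL', Finset.mem_sort]; exact Finset.mem_insert_of_mem haS) hkL'
    rw [hperm.countP_eq, List.countP_cons, countP_lt_getElem hsL hk1]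
    simp [hlt]
    omega
  -- Case a < x: the (k+1)-st smallest is ≤ x
  have hmB : L[k-1] < x → L'[k] ≤ x := by
    intro hlt
    have hxL' : x ∈ L' := by
      rw [hL', Finset.mem_sort]; exact Finset.mem_insert_self _ _
    obtain ⟨j, hj, hxj⟩ := List.mem_iff_getElem.mp hxL'
    have hlow : k ≤ L.countP (fun y => decide (y < x)) := by
      have htk : (L.take k).countP (fun y => decide (y < x)) = k := by
        rw [List.countP_eq_length.mpr, List.length_take, min_eq_left (by omega)]
        intro b hb
        obtain ⟨j', hj', rfl⟩ := List.mem_iff_getElem.mp hb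
        rw [List.getElem_take]
        have hj'k : j' < k := by
          have := hj'; rw [List.length_take] at this; omega
        have : L[j']'(by omega) ≤ L[k-1] :=
          getElem_mono_of_sorted_lt hsL (by omega) hk1
        exact decide_eq_true (lt_of_le_of_lt this hlt)
      conv_rhs => rw [← List.take_append_drop k L]
      rw [List.countP_append, htk]
      omega
    have hjk : k ≤ j := by
      by_contra h
      push_neg at h
      have hc : L'.countP (fun y => decide (y < x)) = j := by
        have := countP_lt_getElem hsL' hj
        rwa [hxj] at this
      rw [hperm.countP_eq, List.countP_cons] at hc
      simp at hc
      omega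
    calc L'[k] ≤ L'[j] := getElem_mono_of_sorted_lt hsL' hjk hj
      _ = x := hxj
  refine ⟨?_, ?_⟩
  · intro hxF
    rw [hgdL] at hxF
    have hxlt : x < L[k-1] := lt_trans hxF (hiz _ haI).1
    rw [hgdL', hgdL, hmain hxlt]
  · intro hFx
    rw [hgdL] at hFx
    rcases lt_or_gt_of_ne hxa with hxa' | hxa'
    · rw [hgdL', hmain hxa']
      exact hFx
    · have hmS : L'[k] ∈ insert x S := by
        rw [← Finset.mem_sort (α := ℝ) (· ≤ ·)]; exact List.getElem_mem _
      have hmI : L'[k] ∈ Set.Ioo (0:ℝ) 1 := by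
        rcases Finset.mem_insert.mp hmS with h | h
        · rw [h]; exact hx
        · exact hS h
      rw [hgdL']
      exact le_of_lt (lt_of_lt_of_le (hiz _ hmI).1 (hmB hxa'))
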